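/- Let S(d, j) = ∑_{k=0}^{d} (-1)^k · C(2k, j) · C(2d-2k, d-j) · C(d, k). Then for all d ≥ 1 and 1 ≤ j ≤ d, one has j · S(d, j) = -2d · S(d-1, j-1). -/

import Mathlib

open Polynomial

/-- `S d j = ∑_{k=0}^{d} (-1)^k C(2k,j) C(2d-2k,d-j) C(d,k)`. -/
def S (d j : ℕ) : ℤ :=
  ∑ k ∈ Finset.range (d + 1),
    (-1 : ℤ) ^ k * (Nat.choose (2 * k) j) * (Nat.choose (2 * d - 2 * k) (d - j)) *
      (Nat.choose d k)

noncomputable def P (d : ℕ) : Polynomial (Polynomial ℤ) :=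
  ((X + 1) ^ 2 - (C (X + 1)) ^ 2) ^ d

lemma coeff1 (d j : ℕ) : ((P d).coeff (d - j)).coeff j = S d j := by
  rw [P, sub_pow, Polynomial.finset_sum_coeff, Polynomial.finset_sum_coeff]
  have hterm : ∀ m ∈ Finset.range (d + 1),
      ((((-1 : Polynomial (Polynomial ℤ)) ^ (m + d) * ((X + 1) ^ 2) ^ m *
          ((C (X + 1)) ^ 2) ^ (d - m) * (d.choose m : Polynomial (Polynomial ℤ))).coeff
          (d - j)).coeff j)
        = (-1 : ℤ) ^ (m + d) * ((2 * m).choose (d - j)) * ((2 * (d - m)).choose j) *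
            (d.choose m) := by
    intro m hm
    have h1 : ((-1 : Polynomial (Polynomial ℤ)) ^ (m + d) * ((X + 1) ^ 2) ^ m *
          ((C (X + 1)) ^ 2) ^ (d - m) * (d.choose m : Polynomial (Polynomial ℤ)))
        = C ((-1) ^ (m + d) * (X + 1) ^ (2 * (d - m)) * (d.choose m : Polynomial ℤ)) *
            (X + 1) ^ (2 * m) := by
      rw [pow_mul, pow_mul]
      simp only [map_mul, map_pow, map_neg, map_one, map_natCast, map_add]
      ring
    rw [h1, Polynomial.coeff_C_mul, Polynomial.coeff_X_add_one_pow]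
    have h2 : ((-1 : Polynomial ℤ) ^ (m + d) * (X + 1) ^ (2 * (d - m)) *
          (d.choose m : Polynomial ℤ) * ((2 * m).choose (d - j) : Polynomial ℤ))
        = C (((-1 : ℤ) ^ (m + d) * (d.choose m : ℤ) * ((2 * m).choose (d - j) : ℤ))) *
            (X + 1) ^ (2 * (d - m)) := by
      simp only [map_mul, map_pow, map_neg, map_one, map_natCast]
      ring
    rw [h2, Polynomial.coeff_C_mul, Polynomial.coeff_X_add_one_pow]
    ring
  rw [Finset.sum_congr rfl hterm, S, ← Finset.sum_range_reflect]
  refine Finset.sum_congr rfl fun m hm => ?_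
  rw [Finset.mem_range] at hm
  have hmd : m ≤ d := by omega
  have e1 : d + 1 - 1 - m = d - m := by omega
  have e2 : 2 * (d - (d - m)) = 2 * m := by omega
  have e5 : 2 * (d - m) = 2 * d - 2 * m := by omega
  have e3 : d.choose (d - m) = d.choose m := Nat.choose_symm hmd
  have e4 : ((-1 : ℤ)) ^ (d - m + d) = (-1) ^ m := by
    rw [show d - m + d = m + 2 * (d - m) by omega, pow_add, pow_mul]
    simp
  rw [e1, e2, e5, e3, e4]
  ring

lemma coeff2 (d j : ℕ) (hjd : j ≤ d) :
    ((P d).coeff (d - j)).coeff j = (-1 : ℤ) ^ j * (d.choose j) * 2 ^ d := by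
  have hfac : P d = (X + C (-Polynomial.X)) ^ d * (X + C (Polynomial.X + 2)) ^ d := by
    rw [P, ← mul_pow]
    congr 1
    simp only [map_add, map_neg, map_one, map_ofNat]
    ring
  rw [hfac, Polynomial.coeff_mul, Polynomial.finset_sum_coeff,
    Finset.sum_eq_single_of_mem (d - j, 0) (by simp)]
  · rw [Polynomial.coeff_X_add_C_pow, Polynomial.coeff_X_add_C_pow,
      show d - (d - j) = j by omega, Nat.sub_zero, Nat.choose_zero_right]
    have h1 : ((-Polynomial.X : Polynomial ℤ) ^ j * (d.choose (d - j) : Polynomial ℤ) *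
        ((Polynomial.X + 2) ^ d * ((1 : ℕ) : Polynomial ℤ)))
        = C ((-1 : ℤ) ^ j * (d.choose (d - j) : ℤ)) *
            ((Polynomial.X + C 2) ^ d * Polynomial.X ^ j) := by
      simp only [map_mul, map_pow, map_neg, map_one, map_natCast, map_ofNat, Nat.cast_one,
        Polynomial.C_eq_natCast]
      ring
    rw [h1, Polynomial.coeff_C_mul, Polynomial.coeff_mul_X_pow', if_pos le_rfl,
      Nat.sub_self, Polynomial.coeff_X_add_C_pow, Nat.sub_zero, Nat.choose_zero_right,
      Nat.choose_symm hjd]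
    push_cast
    ring
  · intro b hb hne
    rw [Finset.HasAntidiagonal.mem_antidiagonal] at hb
    have hlt : b.1 < d - j := by
      rcases Nat.lt_or_ge b.1 (d - j) with h | h
      · exact h
      · exfalso; apply hne; rw [Prod.ext_iff]; constructor <;> omega
    rw [Polynomial.coeff_X_add_C_pow, Polynomial.coeff_X_add_C_pow]
    have h2 : ((-Polynomial.X : Polynomial ℤ) ^ (d - b.1) * (d.choose b.1 : Polynomial ℤ) *
        ((Polynomial.X + 2) ^ (d - b.2) * (d.choose b.2 : Polynomial ℤ)))
        = ((-1 : Polynomial ℤ) ^ (d - b.1) * (d.choose b.1 : Polynomial ℤ) *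
            ((Polynomial.X + 2) ^ (d - b.2) * (d.choose b.2 : Polynomial ℤ))) *
            Polynomial.X ^ (d - b.1) := by
      rw [neg_pow]; ring
    rw [h2, Polynomial.coeff_mul_X_pow', if_neg (by omega)]

lemma Sval (d j : ℕ) (hjd : j ≤ d) : S d j = (-1 : ℤ) ^ j * (d.choose j) * 2 ^ d := by
  rw [← coeff1, coeff2 d j hjd]

theorem stmt1 (d j : ℕ) (hd : 1 ≤ d) (hj1 : 1 ≤ j) (hjd : j ≤ d) :
    (j : ℤ) * S d j = -(2 * (d : ℤ)) * S (d - 1) (j - 1) := by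
  obtain ⟨e, rfl⟩ : ∃ e, d = e + 1 := ⟨d - 1, by omega⟩
  obtain ⟨i, rfl⟩ : ∃ i, j = i + 1 := ⟨j - 1, by omega⟩
  simp only [Nat.add_sub_cancel]
  rw [Sval _ _ hjd, Sval e i (by omega)]
  have key : (e + 1) * e.choose i = (e + 1).choose (i + 1) * (i + 1) :=
    Nat.add_one_mul_choose_eq e i
  have keyz : ((e : ℤ) + 1) * e.choose i = (e + 1).choose (i + 1) * (i + 1) := by
    exact_mod_cast congrArg (Nat.cast : ℕ → ℤ) key
  push_cast
  linear_combination ((2 : ℤ) * 2 ^ e * (-1) ^ i) * keyz
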